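/- Let $f_1,\dots,f_n$ be $L$-smooth and define the incremental gradient epoch $x^0 = x$, $x^{i+1} = x^i - \gamma\nabla f_{i+1}(x^i)$ with $0 < \gamma \le \frac{1}{2Ln}$. Then $\sum_{i=1}^n \|x^i - x\|^2 \le 4\gamma^2 n^3\|\nabla f(x)\|^2 + 4\gamma^2 n^3 \sigma^2$, where $f = \frac{1}{n}\sum_j f_j$ and $\sigma^2 = \frac{1}{n}\sum_{j=1}^n \|\nabla f_j(x) - \nabla f(x)\|^2$. -/

import Mathlib

set_option maxHeartbeats 1000000


/-- Backward per-epoch deviation bound for the Incremental Gradient method: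
`∑_{i=1}^n ‖xⁱ - x‖² ≤ 4γ²n³‖∇f(x)‖² + 4γ²n³σ²`. -/
theorem ig_backward_deviation_bound
    (d n : ℕ) (L γ : ℝ) (hL : 0 < L) (hγ : 0 < γ) (hγn : γ ≤ 1 / (2 * L * n))
    (f : Fin n → EuclideanSpace ℝ (Fin d) → ℝ)
    (hd : ∀ i, Differentiable ℝ (f i))
    (hsm : ∀ i x y, ‖gradient (f i) x - gradient (f i) y‖ ≤ L * ‖x - y‖)
    (x0 : EuclideanSpace ℝ (Fin d))
    (x : Fin (n + 1) → EuclideanSpace ℝ (Fin d)) (hx0 : x 0 = x0)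
    (hx : ∀ i : Fin n, x i.succ = x i.castSucc - γ • gradient (f i) (x i.castSucc)) :
    ∑ i : Fin n, ‖x i.succ - x0‖ ^ 2
      ≤ 4 * γ ^ 2 * n ^ 3 * ‖gradient (fun y => (n : ℝ)⁻¹ * ∑ j, f j y) x0‖ ^ 2
        + 4 * γ ^ 2 * n ^ 3 *
          ((n : ℝ)⁻¹ * ∑ j, ‖gradient (f j) x0
            - gradient (fun y => (n : ℝ)⁻¹ * ∑ l, f l y) x0‖ ^ 2) := by
  rcases Nat.eq_zero_or_pos n with hn | hn
  · subst hn
    simp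
  have hnR : (0 : ℝ) < n := by exact_mod_cast hn
  set g : Fin n → EuclideanSpace ℝ (Fin d) := fun j => gradient (f j) x0 with hgdef
  -- gradient of the average
  have hgrad : HasGradientAt (fun y => (n : ℝ)⁻¹ * ∑ j, f j y)
      ((n : ℝ)⁻¹ • ∑ j, g j) x0 := by
    have h1 : ∀ j : Fin n, HasFDerivAt (f j)
        (InnerProductSpace.toDual ℝ (EuclideanSpace ℝ (Fin d)) (g j)) x0 :=
      fun j => ((hd j x0).hasGradientAt).hasFDerivAt
    have h2 : HasFDerivAt (fun y => ∑ j, f j y)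
        (∑ j, InnerProductSpace.toDual ℝ (EuclideanSpace ℝ (Fin d)) (g j)) x0 :=
      HasFDerivAt.fun_sum fun j _ => h1 j
    have h3 := h2.const_mul ((n : ℝ)⁻¹)
    rw [hasGradientAt_iff_hasFDerivAt]
    convert h3 using 1
    · rfl
    simp [map_sum, Finset.smul_sum]
  have hgb : gradient (fun y => (n : ℝ)⁻¹ * ∑ j, f j y) x0 = (n : ℝ)⁻¹ • ∑ j, g j :=
    hgrad.gradient
  set gb : EuclideanSpace ℝ (Fin d) := (n : ℝ)⁻¹ • ∑ j, g j with hgbdef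
  have hsumg : ∑ j, g j = (n : ℝ) • gb := by
    rw [hgbdef, smul_smul, mul_inv_cancel₀ (ne_of_gt hnR), one_smul]
  -- bias-variance identity
  have hid : ∑ j : Fin n, ‖g j - gb‖ ^ 2 = (∑ j : Fin n, ‖g j‖ ^ 2) - n * ‖gb‖ ^ 2 := by
    have hinner : ∑ j : Fin n, (inner ℝ (g j) gb : ℝ) = n * ‖gb‖ ^ 2 := by
      rw [← sum_inner, hsumg, real_inner_smul_left, real_inner_self_eq_norm_sq]
    calc ∑ j : Fin n, ‖g j - gb‖ ^ 2
        = ∑ j : Fin n, (‖g j‖ ^ 2 - 2 * (inner ℝ (g j) gb : ℝ) + ‖gb‖ ^ 2) :=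
          Finset.sum_congr rfl fun j _ => norm_sub_sq_real _ _
      _ = (∑ j : Fin n, ‖g j‖ ^ 2) - 2 * (∑ j : Fin n, (inner ℝ (g j) gb : ℝ))
            + n * ‖gb‖ ^ 2 := by
          rw [Finset.sum_add_distrib, Finset.sum_sub_distrib, ← Finset.mul_sum,
            Finset.sum_const, Finset.card_univ, Fintype.card_fin, nsmul_eq_mul]
      _ = (∑ j : Fin n, ‖g j‖ ^ 2) - n * ‖gb‖ ^ 2 := by rw [hinner]; ring
  -- the padded gradient norms
  set N : ℕ → ℝ := fun j => if h : j < n then ‖g ⟨j, h⟩‖ else 0 with hNdef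
  have hN0 : ∀ j, 0 ≤ N j := by
    intro j
    rw [hNdef]
    dsimp only
    split <;> positivity
  have hb1 : (1 : ℝ) ≤ 1 + γ * L := by nlinarith
  -- the key induction
  have hkey : ∀ i : ℕ, ∀ hi : i < n + 1,
      ‖x ⟨i, hi⟩ - x0‖ ≤ γ * (1 + γ * L) ^ i * ∑ j ∈ Finset.range i, N j := by
    intro i
    induction i with
    | zero =>
      intro hi
      have : (⟨0, hi⟩ : Fin (n + 1)) = 0 := rfl
      rw [this, hx0]
      simp
    | succ i ih =>
      intro hi
      have hi' : i < n := by omega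
      have hiS : i < n + 1 := by omega
      have ihh := ih hiS
      have hNi : N i = ‖g ⟨i, hi'⟩‖ := by rw [hNdef]; simp [hi']
      have hstep : x ⟨i + 1, hi⟩
          = x ⟨i, hiS⟩ - γ • gradient (f ⟨i, hi'⟩) (x ⟨i, hiS⟩) := hx ⟨i, hi'⟩
      have h1 : ‖x ⟨i + 1, hi⟩ - x0‖
          ≤ ‖x ⟨i, hiS⟩ - x0‖ + γ * ‖gradient (f ⟨i, hi'⟩) (x ⟨i, hiS⟩)‖ := by
        rw [hstep]
        have : x ⟨i, hiS⟩ - γ • gradient (f ⟨i, hi'⟩) (x ⟨i, hiS⟩) - x0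
            = (x ⟨i, hiS⟩ - x0) - γ • gradient (f ⟨i, hi'⟩) (x ⟨i, hiS⟩) := by abel
        rw [this]
        refine (norm_sub_le _ _).trans ?_
        rw [norm_smul, Real.norm_eq_abs, abs_of_pos hγ]
      have h2 : ‖gradient (f ⟨i, hi'⟩) (x ⟨i, hiS⟩)‖
          ≤ L * ‖x ⟨i, hiS⟩ - x0‖ + ‖g ⟨i, hi'⟩‖ := by
        have hlip := hsm ⟨i, hi'⟩ (x ⟨i, hiS⟩) x0
        have : ‖gradient (f ⟨i, hi'⟩) (x ⟨i, hiS⟩)‖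
            ≤ ‖gradient (f ⟨i, hi'⟩) (x ⟨i, hiS⟩) - gradient (f ⟨i, hi'⟩) x0‖
              + ‖gradient (f ⟨i, hi'⟩) x0‖ := by
          calc ‖gradient (f ⟨i, hi'⟩) (x ⟨i, hiS⟩)‖
              = ‖(gradient (f ⟨i, hi'⟩) (x ⟨i, hiS⟩) - gradient (f ⟨i, hi'⟩) x0)
                  + gradient (f ⟨i, hi'⟩) x0‖ := by rw [sub_add_cancel]
            _ ≤ _ := norm_add_le _ _
        have hgg : gradient (f ⟨i, hi'⟩) x0 = g ⟨i, hi'⟩ := rfl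
        rw [hgg] at this
        linarith
      have hSnn : 0 ≤ ∑ j ∈ Finset.range i, N j :=
        Finset.sum_nonneg fun j _ => hN0 j
      have hp1 : (1 : ℝ) ≤ (1 + γ * L) ^ i := one_le_pow₀ hb1
      rw [Finset.sum_range_succ]
      calc ‖x ⟨i + 1, hi⟩ - x0‖
          ≤ (1 + γ * L) * ‖x ⟨i, hiS⟩ - x0‖ + γ * ‖g ⟨i, hi'⟩‖ := by
            have := mul_le_mul_of_nonneg_left h2 hγ.le
            linarith
        _ ≤ (1 + γ * L) * (γ * (1 + γ * L) ^ i * ∑ j ∈ Finset.range i, N j)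
              + γ * N i := by
            rw [hNi]
            have := mul_le_mul_of_nonneg_left ihh (by linarith : (0:ℝ) ≤ 1 + γ * L)
            linarith
        _ ≤ γ * (1 + γ * L) ^ (i + 1) * ((∑ j ∈ Finset.range i, N j) + N i) := by
            rw [pow_succ]
            have hone : (1 : ℝ) ≤ (1 + γ * L) ^ i * (1 + γ * L) := by
              have := mul_le_mul hp1 hb1 zero_le_one (by positivity :
                (0:ℝ) ≤ (1 + γ * L) ^ i)
              linarith
            have hint : (0:ℝ) ≤ γ * N i * ((1 + γ * L) ^ i * (1 + γ * L) - 1) :=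
              mul_nonneg (mul_nonneg hγ.le (hN0 i)) (by linarith)
            nlinarith [hint]
  -- the constant bound (1+γL)^n ≤ 2
  have hc2 : (1 + γ * L) ^ n ≤ 2 := by
    have hLn : 0 < 2 * L * n := by positivity
    have hhalf : γ * L * n ≤ 1 / 2 := by
      have := (le_div_iff₀ hLn).mp hγn
      nlinarith
    have e1 : (1 + γ * L) ^ n ≤ Real.exp (γ * L) ^ n := by
      apply pow_le_pow_left₀ (by linarith)
      linarith [Real.add_one_le_exp (γ * L)]
    have e2 : Real.exp (γ * L) ^ n = Real.exp (n * (γ * L)) :=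
      (Real.exp_nat_mul _ n).symm
    have e3 : Real.exp ((n : ℝ) * (γ * L)) ≤ Real.exp (1 / 2) := by
      apply Real.exp_le_exp.mpr
      nlinarith
    have e4 : Real.exp (1 / 2) ≤ 2 := by
      have hsq : Real.exp (1 / 2) * Real.exp (1 / 2) = Real.exp 1 := by
        rw [← Real.exp_add]; norm_num
      nlinarith [Real.exp_one_lt_d9, Real.exp_pos (1 / 2)]
    calc (1 + γ * L) ^ n ≤ Real.exp (γ * L) ^ n := e1
      _ = Real.exp ((n : ℝ) * (γ * L)) := e2
      _ ≤ Real.exp (1 / 2) := e3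
      _ ≤ 2 := e4
  set S : ℝ := ∑ j : Fin n, ‖g j‖ with hSdef
  have hS0 : 0 ≤ S := Finset.sum_nonneg fun j _ => norm_nonneg _
  have hSrange : ∑ j ∈ Finset.range n, N j = S := by
    rw [hSdef, ← Fin.sum_univ_eq_sum_range]
    exact Finset.sum_congr rfl fun j _ => by rw [hNdef]; simp [j.isLt]
  -- uniform bound on each iterate deviation
  have hbound : ∀ i : Fin n, ‖x i.succ - x0‖ ≤ γ * 2 * S := by
    intro i
    have hi1 : (i : ℕ) + 1 < n + 1 := by omega
    have h := hkey ((i : ℕ) + 1) hi1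
    have heq : x i.succ = x ⟨(i : ℕ) + 1, hi1⟩ := rfl
    rw [heq]
    refine h.trans ?_
    have hpow : (1 + γ * L) ^ ((i : ℕ) + 1) ≤ 2 :=
      le_trans (pow_le_pow_right₀ hb1 (by omega : (i : ℕ) + 1 ≤ n)) hc2
    have hsub : ∑ j ∈ Finset.range ((i : ℕ) + 1), N j ≤ S := by
      rw [← hSrange]
      exact Finset.sum_le_sum_of_subset_of_nonneg
        (Finset.range_subset_range.mpr (by omega)) (fun j _ _ => hN0 j)
    have hsum0 : 0 ≤ ∑ j ∈ Finset.range ((i : ℕ) + 1), N j :=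
      Finset.sum_nonneg fun j _ => hN0 j
    have hmul : (1 + γ * L) ^ ((i : ℕ) + 1) * ∑ j ∈ Finset.range ((i : ℕ) + 1), N j
        ≤ 2 * S := mul_le_mul hpow hsub hsum0 (by norm_num)
    have := mul_le_mul_of_nonneg_left hmul hγ.le
    linarith [this]
  -- Cauchy–Schwarz
  have hCS : S ^ 2 ≤ n * ∑ j : Fin n, ‖g j‖ ^ 2 := by
    have := sq_sum_le_card_mul_sum_sq (s := (Finset.univ : Finset (Fin n)))
      (f := fun j => ‖g j‖)
    simpa [Finset.card_univ] using this
  -- main estimate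
  have KEY : ∑ i : Fin n, ‖x i.succ - x0‖ ^ 2
      ≤ 4 * γ ^ 2 * n ^ 2 * ∑ j : Fin n, ‖g j‖ ^ 2 := by
    have h1 : ∑ i : Fin n, ‖x i.succ - x0‖ ^ 2 ≤ ∑ _i : Fin n, (γ * 2 * S) ^ 2 :=
      Finset.sum_le_sum fun i _ => pow_le_pow_left₀ (norm_nonneg _) (hbound i) 2
    have h2 : ∑ _i : Fin n, (γ * 2 * S) ^ 2 = n * (γ * 2 * S) ^ 2 := by
      rw [Finset.sum_const, Finset.card_univ, Fintype.card_fin, nsmul_eq_mul]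
    have h3 : (γ * 2 * S) ^ 2 ≤ 4 * γ ^ 2 * (n * ∑ j : Fin n, ‖g j‖ ^ 2) := by
      have : (γ * 2 * S) ^ 2 = 4 * γ ^ 2 * S ^ 2 := by ring
      rw [this]
      have h4 : (0 : ℝ) ≤ 4 * γ ^ 2 := by positivity
      exact mul_le_mul_of_nonneg_left hCS h4
    calc ∑ i : Fin n, ‖x i.succ - x0‖ ^ 2 ≤ n * (γ * 2 * S) ^ 2 := by
          rw [← h2]; exact h1
      _ ≤ n * (4 * γ ^ 2 * (n * ∑ j : Fin n, ‖g j‖ ^ 2)) :=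
          mul_le_mul_of_nonneg_left h3 hnR.le
      _ = 4 * γ ^ 2 * n ^ 2 * ∑ j : Fin n, ‖g j‖ ^ 2 := by ring
  rw [hgb]
  refine KEY.trans (le_of_eq ?_)
  have hfold : ∀ j : Fin n, gradient (f j) x0 = g j := fun j => rfl
  simp only [hfold]
  rw [hid]
  field_simp
  ring
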